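/- arXiv:1611.06870 — 2 statements merged into one kernel-verified Lean document; each statement's English description precedes it below -/
import Mathlib

section
/- Napoleon's theorem: Given any triangle ABC in the plane, if equilateral triangles are erected externally on each of its three sides, then the centroids of these three equilateral triangles form an equilateral triangle. -/
open Complex

/-- Napoleon's theorem: the centroids of the equilateral triangles erected
externally on the sides of any triangle `ABC` form an equilateral triangle.
For a positively oriented triangle, the external apex on side `XY` is
`X + (Y - X) * exp(-π i / 3)`. -/
theorem napoleon (A B C : ℂ)
    (hor : 0 ≤ ((starRingEnd ℂ) (B - A) * (C - A)).im)
    (N₁ N₂ N₃ : ℂ)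
    (hN₁ : N₁ = (A + B + (A + (B - A) * Complex.exp (-(Real.pi : ℂ) * Complex.I / 3))) / 3)
    (hN₂ : N₂ = (B + C + (B + (C - B) * Complex.exp (-(Real.pi : ℂ) * Complex.I / 3))) / 3)
    (hN₃ : N₃ = (C + A + (C + (A - C) * Complex.exp (-(Real.pi : ℂ) * Complex.I / 3))) / 3) :
    dist N₁ N₂ = dist N₂ N₃ ∧ dist N₂ N₃ = dist N₃ N₁ := by
  set ζ : ℂ := Complex.exp (-(Real.pi : ℂ) * Complex.I / 3) with hζdef
  have hval : ζ = Complex.cos ((-(Real.pi / 3) : ℝ) : ℂ) +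
      Complex.sin ((-(Real.pi / 3) : ℝ) : ℂ) * Complex.I := by
    rw [hζdef, ← Complex.exp_mul_I]
    norm_num
    ring_nf
  have hζ : ζ ^ 2 = ζ - 1 := by
    rw [hval]
    rw [← Complex.ofReal_cos, ← Complex.ofReal_sin]
    rw [Real.cos_neg, Real.sin_neg, Real.cos_pi_div_three, Real.sin_pi_div_three]
    have h3 : ((Real.sqrt 3 : ℝ) : ℂ) ^ 2 = 3 := by
      rw [← Complex.ofReal_pow, Real.sq_sqrt (by norm_num : (3:ℝ) ≥ 0)]
      norm_num
    push_cast
    ring_nf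
    rw [Complex.I_sq]
    linear_combination (-(1:ℂ)/4) * h3
  have habs : ‖ζ‖ = 1 := by
    rw [hζdef, Complex.norm_exp]
    have : (-(Real.pi : ℂ) * Complex.I / 3).re = 0 := by simp
    rw [this, Real.exp_zero]
  have h12 : N₁ - N₂ = ζ ^ 2 * (N₂ - N₃) := by
    rw [hN₁, hN₂, hN₃]
    linear_combination (((A + B - 2*C)*ζ + (2*A - B - C))/3) * hζ
  have h23 : N₂ - N₃ = ζ ^ 2 * (N₃ - N₁) := by
    rw [hN₁, hN₂, hN₃]
    linear_combination (((B + C - 2*A)*ζ + (2*B - C - A))/3) * hζ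
  constructor
  · rw [Complex.dist_eq, Complex.dist_eq, h12, norm_mul, norm_pow, habs]
    ring
  · rw [Complex.dist_eq, Complex.dist_eq, h23, norm_mul, norm_pow, habs]
    ring
end

section
/- The squared side length of the Napoleon triangle: For a triangle ABC with side lengths a = |BC|, b = |CA|, c = |AB| and area S, the common side length s of the equilateral triangle formed by the centroids of externally erected equilateral triangles satisfies 3·s² = (a² + b² + c²)/2 + 2√3·S. -/
open Complex

lemma exp_neg_pi_div_three :
    Complex.exp (-(Real.pi : ℂ) * Complex.I / 3) =
      (1 / 2 : ℂ) - ((Real.sqrt 3 / 2 : ℝ) : ℂ) * Complex.I := by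
  have h : -(Real.pi : ℂ) * Complex.I / 3 = ((-(Real.pi / 3) : ℝ) : ℂ) * Complex.I := by
    push_cast; ring
  rw [h, Complex.exp_mul_I, ← Complex.ofReal_cos, ← Complex.ofReal_sin]
  rw [Real.cos_neg, Real.sin_neg, Real.cos_pi_div_three, Real.sin_pi_div_three]
  push_cast
  ring

/-- The squared side length of the Napoleon triangle: for a (positively
oriented) triangle `ABC` with side lengths `a, b, c` and area `S`, the common
side length `s` of the Napoleon triangle satisfies
`3 s² = (a² + b² + c²)/2 + 2√3 S`. -/
theorem napoleon_side_sq (A B C : ℂ) (a b c S s : ℝ)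
    (ha : a = dist B C) (hb : b = dist C A) (hc : c = dist A B)
    (hS : S = (1 / 2) * ((starRingEnd ℂ) (B - A) * (C - A)).im)
    (hS0 : 0 ≤ S)
    (N₁ N₂ : ℂ)
    (hN₁ : N₁ = (A + B + (A + (B - A) * Complex.exp (-(Real.pi : ℂ) * Complex.I / 3))) / 3)
    (hN₂ : N₂ = (B + C + (B + (C - B) * Complex.exp (-(Real.pi : ℂ) * Complex.I / 3))) / 3)
    (hs : s = dist N₁ N₂) :
    3 * s ^ 2 = (a ^ 2 + b ^ 2 + c ^ 2) / 2 + 2 * Real.sqrt 3 * S := by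
  have ha2 : a ^ 2 = Complex.normSq (B - C) := by
    rw [ha, Complex.dist_eq, Complex.sq_norm]
  have hb2 : b ^ 2 = Complex.normSq (C - A) := by
    rw [hb, Complex.dist_eq, Complex.sq_norm]
  have hc2 : c ^ 2 = Complex.normSq (A - B) := by
    rw [hc, Complex.dist_eq, Complex.sq_norm]
  have hs2 : s ^ 2 = Complex.normSq (N₁ - N₂) := by
    rw [hs, Complex.dist_eq, Complex.sq_norm]
  have hr : Real.sqrt 3 ^ 2 = 3 := Real.sq_sqrt (by norm_num)
  rw [hs2, ha2, hb2, hc2, hS, hN₁, hN₂, exp_neg_pi_div_three]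
  simp only [Complex.normSq_apply, Complex.sub_re, Complex.sub_im, Complex.add_re,
    Complex.add_im, Complex.div_re, Complex.div_im, Complex.mul_re, Complex.mul_im,
    Complex.I_re, Complex.I_im, Complex.ofReal_re, Complex.ofReal_im, Complex.one_re,
    Complex.one_im, Complex.conj_re, Complex.conj_im, Complex.normSq_ofNat]
  norm_num [Complex.normSq_apply]
  linear_combination (((A.re - 2*B.re + C.re)^2 + (A.im - 2*B.im + C.im)^2)/12) * hr
end
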